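/- Suppose the constraints are population-level with componentwise nonnegative costs. Let ε1 ≥ 0 and fix c1, c2, c3, c4 > 0. Let π be a policy with G_fea(π) = 0 and 0 ≤ G_opt(π) ≤ ε1. Set L := Ψ(π) and w := γ0 − Σ_{t∈𝒯} c_t(L_t) (so 0 ≤ w ≤ γ0). Then there exists a solution (d, y, z) of the KKT system 𝒦^p(L) satisfying ‖y‖_1 ≤ (|S||𝒯|(|𝒯|+1)/2)·r_max and ‖z‖_1 ≤ |S||A|(|𝒯|² − |𝒯| + 2)·r_max such that (L, y, z, w) is a feasible point of the population-level CMFOMO problem whose objective value satisfies 0 ≤ objective ≤ ε1·c3. -/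

import Mathlib

open Finset

namespace CMFG

/-- Membership in the probability simplex on a finite type. -/
def IsSimplex {X : Type*} [Fintype X] (f : X → ℝ) : Prop :=
  (∀ x, 0 ≤ f x) ∧ ∑ x, f x = 1

variable {S A : Type*} [Fintype S] [Fintype A]

/-- A (Markov, randomized) policy: `π t s ∈ Δ(A)` for every time `t` and state `s`. -/
def IsPolicy (π : ℕ → S → A → ℝ) : Prop := ∀ t s, IsSimplex (π t s)

/-- A mean-field flow: `L t ∈ Δ(S × A)` for every time `t`. -/
def IsFlow (L : ℕ → S × A → ℝ) : Prop := ∀ t, IsSimplex (L t)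

/-- The transition data is a Markov kernel: `p t s a m ∈ Δ(S)` whenever `m ∈ Δ(S × A)`. -/
def IsKernel (T : ℕ) (p : ℕ → S → A → (S × A → ℝ) → S → ℝ) : Prop :=
  ∀ t ≤ T, ∀ s a m, IsSimplex m → IsSimplex (p t s a m)

/-- The occupation measure `Ψ(π, L)` of a representative agent using policy `π`
under the mean-field flow `L`. -/
def psi (μ0 : S → ℝ) (p : ℕ → S → A → (S × A → ℝ) → S → ℝ)
    (π : ℕ → S → A → ℝ) (L : ℕ → S × A → ℝ) : ℕ → S × A → ℝ
  | 0 => fun sa => π 0 sa.1 sa.2 * μ0 sa.1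
  | t + 1 => fun sa =>
      π (t + 1) sa.1 sa.2 *
        ∑ sa' : S × A, p t sa'.1 sa'.2 (L t) sa.1 * psi μ0 p π L t sa'

/-- The mean-field flow `Ψ(π)` induced by the policy `π` alone. -/
def psiInd (μ0 : S → ℝ) (p : ℕ → S → A → (S × A → ℝ) → S → ℝ)
    (π : ℕ → S → A → ℝ) : ℕ → S × A → ℝ
  | 0 => fun sa => π 0 sa.1 sa.2 * μ0 sa.1
  | t + 1 => fun sa =>
      π (t + 1) sa.1 sa.2 *
        ∑ sa' : S × A, p t sa'.1 sa'.2 (psiInd μ0 p π t) sa.1 * psiInd μ0 p π t sa'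

/-- Expected cumulative reward `V^π(L)` of policy `π` under the mean-field flow `L`. -/
def V (T : ℕ) (μ0 : S → ℝ) (p : ℕ → S → A → (S × A → ℝ) → S → ℝ)
    (r : ℕ → S → A → (S × A → ℝ) → ℝ) (π : ℕ → S → A → ℝ) (L : ℕ → S × A → ℝ) : ℝ :=
  ∑ t ∈ Finset.range (T + 1), ∑ sa : S × A, r t sa.1 sa.2 (L t) * psi μ0 p π L t sa

/-- Expected cumulative cost `𝒞^π(L) ∈ ℝ^k` of policy `π` under the mean-field flow `L`. -/
def Cost (T k : ℕ) (μ0 : S → ℝ) (p : ℕ → S → A → (S × A → ℝ) → S → ℝ)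
    (c : ℕ → S → A → (S × A → ℝ) → Fin k → ℝ) (π : ℕ → S → A → ℝ)
    (L : ℕ → S × A → ℝ) : Fin k → ℝ :=
  fun i => ∑ t ∈ Finset.range (T + 1), ∑ sa : S × A, c t sa.1 sa.2 (L t) i * psi μ0 p π L t sa

/-- `π` is an optimal policy of the constrained MDP `CMDP(L)` with threshold `γ0`. -/
def IsCMDPOptimal (T k : ℕ) (μ0 : S → ℝ) (p : ℕ → S → A → (S × A → ℝ) → S → ℝ)
    (r : ℕ → S → A → (S × A → ℝ) → ℝ) (c : ℕ → S → A → (S × A → ℝ) → Fin k → ℝ)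
    (γ0 : Fin k → ℝ) (π : ℕ → S → A → ℝ) (L : ℕ → S × A → ℝ) : Prop :=
  IsPolicy π ∧ (∀ i, Cost T k μ0 p c π L i ≤ γ0 i) ∧
    ∀ π', IsPolicy π' → (∀ i, Cost T k μ0 p c π' L i ≤ γ0 i) →
      V T μ0 p r π' L ≤ V T μ0 p r π L

/-- `π` is an optimal policy of the unconstrained MDP `MDP(L)`. -/
def IsMDPOptimal (T : ℕ) (μ0 : S → ℝ) (p : ℕ → S → A → (S × A → ℝ) → S → ℝ)
    (r : ℕ → S → A → (S × A → ℝ) → ℝ) (π : ℕ → S → A → ℝ) (L : ℕ → S × A → ℝ) : Prop :=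
  IsPolicy π ∧ ∀ π', IsPolicy π' → V T μ0 p r π' L ≤ V T μ0 p r π L

/-- `(π, L)` is a Nash equilibrium of the constrained mean-field game (Definition 2.1):
optimality for `CMDP(L)` together with the consistency condition `L = Ψ(π)` on `𝒯`. -/
def IsCMFGNash (T k : ℕ) (μ0 : S → ℝ) (p : ℕ → S → A → (S × A → ℝ) → S → ℝ)
    (r : ℕ → S → A → (S × A → ℝ) → ℝ) (c : ℕ → S → A → (S × A → ℝ) → Fin k → ℝ)
    (γ0 : Fin k → ℝ) (π : ℕ → S → A → ℝ) (L : ℕ → S × A → ℝ) : Prop :=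
  IsCMDPOptimal T k μ0 p r c γ0 π L ∧ ∀ t ≤ T, L t = psiInd μ0 p π t

/-- Strict feasibility (Assumption 3.1) with margin `δ`. -/
def StrictFeasible (T k : ℕ) (μ0 : S → ℝ) (p : ℕ → S → A → (S × A → ℝ) → S → ℝ)
    (c : ℕ → S → A → (S × A → ℝ) → Fin k → ℝ) (γ0 : Fin k → ℝ) (δ : ℝ) : Prop :=
  0 < δ ∧ ∀ L, IsFlow L → ∀ i : Fin k, ∃ π, IsPolicy π ∧
    (∀ j, Cost T k μ0 p c π L j ≤ γ0 j) ∧ Cost T k μ0 p c π L i ≤ γ0 i - δ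

/-- Strengthened strict feasibility (Assumption 5.1) with margin `δ`. -/
def StrongFeasible (T k : ℕ) (μ0 : S → ℝ) (p : ℕ → S → A → (S × A → ℝ) → S → ℝ)
    (c : ℕ → S → A → (S × A → ℝ) → Fin k → ℝ) (γ0 : Fin k → ℝ) (δ : ℝ) : Prop :=
  0 < δ ∧ ∀ L, IsFlow L → ∃ π, IsPolicy π ∧ ∀ i, Cost T k μ0 p c π L i ≤ γ0 i - δ

/-- Continuity (Assumption 3.2): `p`, `r`, `c` are continuous in the mean-field argument. -/
def ContinuousData (T k : ℕ) (p : ℕ → S → A → (S × A → ℝ) → S → ℝ)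
    (r : ℕ → S → A → (S × A → ℝ) → ℝ)
    (c : ℕ → S → A → (S × A → ℝ) → Fin k → ℝ) : Prop :=
  (∀ t ≤ T, ∀ s a, ContinuousOn (fun m : S × A → ℝ => p t s a m) {m | IsSimplex m}) ∧
  (∀ t ≤ T, ∀ s a, ContinuousOn (fun m : S × A → ℝ => r t s a m) {m | IsSimplex m}) ∧
  (∀ t ≤ T, ∀ s a, ContinuousOn (fun m : S × A → ℝ => c t s a m) {m | IsSimplex m})

/-- Boundedness: `0 ≤ r ≤ rmax` and `0 ≤ c ≤ cmax` entrywise on the simplex. -/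
def BoundedData (T k : ℕ) (r : ℕ → S → A → (S × A → ℝ) → ℝ)
    (c : ℕ → S → A → (S × A → ℝ) → Fin k → ℝ) (rmax cmax : ℝ) : Prop :=
  ∀ t ≤ T, ∀ s a m, IsSimplex m →
    (0 ≤ r t s a m ∧ r t s a m ≤ rmax) ∧ ∀ i, 0 ≤ c t s a m i ∧ c t s a m i ≤ cmax

/-- The ℓ¹ norm of a finitely supported real vector. -/
def norm1 {J : Type*} [Fintype J] (v : J → ℝ) : ℝ := ∑ j, |v j|

/-- The ℓ² norm of a finitely supported real vector. -/
noncomputable def norm2 {J : Type*} [Fintype J] (v : J → ℝ) : ℝ :=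
  Real.sqrt (∑ j, (v j) ^ 2)

/-- Lipschitz continuity (Assumption 3.3) of `p`, `r`, `c` in the mean-field argument. -/
def LipschitzData (T k : ℕ) (p : ℕ → S → A → (S × A → ℝ) → S → ℝ)
    (r : ℕ → S → A → (S × A → ℝ) → ℝ)
    (c : ℕ → S → A → (S × A → ℝ) → Fin k → ℝ) (Cp Cr Cc : ℝ) : Prop :=
  0 < Cp ∧ 0 < Cr ∧ 0 < Cc ∧
  ∀ t ≤ T, ∀ m1 m2 : S × A → ℝ, IsSimplex m1 → IsSimplex m2 →
    ((∑ sa : S × A, ∑ s' : S, |p t sa.1 sa.2 m1 s' - p t sa.1 sa.2 m2 s'|) ≤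
        Cp * norm1 (fun sa => m1 sa - m2 sa)) ∧
    ((∑ sa : S × A, |r t sa.1 sa.2 m1 - r t sa.1 sa.2 m2|) ≤
        Cr * norm1 (fun sa => m1 sa - m2 sa)) ∧
    ((∑ sa : S × A, ∑ i, |c t sa.1 sa.2 m1 i - c t sa.1 sa.2 m2 i|) ≤
        Cc * norm1 (fun sa => m1 sa - m2 sa))

/-- Lipschitz continuity of the transition kernels alone. -/
def LipschitzKernel (T : ℕ) (p : ℕ → S → A → (S × A → ℝ) → S → ℝ) (Cp : ℝ) : Prop :=
  0 < Cp ∧ ∀ t ≤ T, ∀ m1 m2 : S × A → ℝ, IsSimplex m1 → IsSimplex m2 →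
    (∑ sa : S × A, ∑ s' : S, |p t sa.1 sa.2 m1 s' - p t sa.1 sa.2 m2 s'|) ≤
      Cp * norm1 (fun sa => m1 sa - m2 sa)

/-- The reward vector `r_L ∈ ℝ^{|S||A||𝒯|}`. -/
def rLvec (T : ℕ) (r : ℕ → S → A → (S × A → ℝ) → ℝ) (L : ℕ → S × A → ℝ) :
    Fin (T + 1) × S × A → ℝ :=
  fun x => r (x.1 : ℕ) x.2.1 x.2.2 (L (x.1 : ℕ))

/-- The cost matrix `c_L ∈ ℝ^{k × |S||A||𝒯|}`. -/
def cLmat (T k : ℕ) (c : ℕ → S → A → (S × A → ℝ) → Fin k → ℝ) (L : ℕ → S × A → ℝ) :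
    Fin k → Fin (T + 1) × S × A → ℝ :=
  fun i x => c (x.1 : ℕ) x.2.1 x.2.2 (L (x.1 : ℕ)) i

/-- The right-hand-side vector `b ∈ ℝ^{|S||𝒯|}`. -/
def bvec (T : ℕ) (μ0 : S → ℝ) : Fin (T + 1) × S → ℝ :=
  fun row => if (row.1 : ℕ) = T then μ0 row.2 else 0

/-- The constraint matrix `A_L ∈ ℝ^{|S||𝒯| × |S||A||𝒯|}`; `A_L d = b` encodes
`Σ_a d_0(s,a) = μ0(s)` and `Σ_a d_{t+1}(s,a) = Σ_{s',a'} p_t(s|s',a',L_t) d_t(s',a')`. -/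
def ALmat [DecidableEq S] (T : ℕ) (p : ℕ → S → A → (S × A → ℝ) → S → ℝ)
    (L : ℕ → S × A → ℝ) : Fin (T + 1) × S → Fin (T + 1) × S × A → ℝ :=
  fun row col =>
    if (row.1 : ℕ) < T then
      (if col.1 = row.1 then p (row.1 : ℕ) col.2.1 col.2.2 (L (row.1 : ℕ)) row.2 else 0) +
        (if (col.1 : ℕ) = (row.1 : ℕ) + 1 ∧ col.2.1 = row.2 then -1 else 0)
    else if (col.1 : ℕ) = 0 ∧ col.2.1 = row.2 then 1 else 0

/-- Matrix–vector product. -/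
def mulVec {I J : Type*} [Fintype J] (M : I → J → ℝ) (v : J → ℝ) : I → ℝ :=
  fun i => ∑ j, M i j * v j

/-- Transposed matrix–vector product `M^⊤ y`. -/
def tmulVec {I J : Type*} [Fintype I] (M : I → J → ℝ) (y : I → ℝ) : J → ℝ :=
  fun j => ∑ i, M i j * y i

/-- Euclidean inner product. -/
def dot {J : Type*} [Fintype J] (u v : J → ℝ) : ℝ := ∑ j, u j * v j

/-- View a vector indexed by `Fin (T+1) × S × A` as a time-indexed family. -/
def toFam (T : ℕ) (d : Fin (T + 1) × S × A → ℝ) : ℕ → S × A → ℝ :=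
  fun t sa => if h : t < T + 1 then d (⟨t, h⟩, sa.1, sa.2) else 0

/-- View a time-indexed family as a vector indexed by `Fin (T+1) × S × A`. -/
def toVec (T : ℕ) (d : ℕ → S × A → ℝ) : Fin (T + 1) × S × A → ℝ :=
  fun x => d (x.1 : ℕ) (x.2.1, x.2.2)

/-- `π ∈ Π(d)`: `π` is a policy inducing the occupation measure `d` wherever
`d` puts positive mass on a state. -/
def InPi (T : ℕ) (d : ℕ → S × A → ℝ) (π : ℕ → S → A → ℝ) : Prop :=
  IsPolicy π ∧ ∀ t ≤ T, ∀ s a, 0 < ∑ a' : A, d t (s, a') →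
    π t s a = d t (s, a) / ∑ a' : A, d t (s, a')

/-- Feasibility for the linear program `LP(L)`. -/
def LPFeasible [DecidableEq S] (T k : ℕ) (μ0 : S → ℝ)
    (p : ℕ → S → A → (S × A → ℝ) → S → ℝ)
    (c : ℕ → S → A → (S × A → ℝ) → Fin k → ℝ) (γ0 : Fin k → ℝ)
    (L : ℕ → S × A → ℝ) (d : Fin (T + 1) × S × A → ℝ) : Prop :=
  mulVec (ALmat T p L) d = bvec T μ0 ∧ (∀ i, dot (cLmat T k c L i) d ≤ γ0 i) ∧ ∀ x, 0 ≤ d x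

/-- Optimality for the linear program `LP(L)` (minimizing `-r_L^⊤ d`). -/
def LPOptimal [DecidableEq S] (T k : ℕ) (μ0 : S → ℝ)
    (p : ℕ → S → A → (S × A → ℝ) → S → ℝ) (r : ℕ → S → A → (S × A → ℝ) → ℝ)
    (c : ℕ → S → A → (S × A → ℝ) → Fin k → ℝ) (γ0 : Fin k → ℝ)
    (L : ℕ → S × A → ℝ) (d : Fin (T + 1) × S × A → ℝ) : Prop :=
  LPFeasible T k μ0 p c γ0 L d ∧
    ∀ d', LPFeasible T k μ0 p c γ0 L d' → dot (rLvec T r L) d' ≤ dot (rLvec T r L) d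

/-- The KKT system `𝒦(L)` associated with `LP(L)`. -/
def KKT [DecidableEq S] (T k : ℕ) (μ0 : S → ℝ)
    (p : ℕ → S → A → (S × A → ℝ) → S → ℝ) (r : ℕ → S → A → (S × A → ℝ) → ℝ)
    (c : ℕ → S → A → (S × A → ℝ) → Fin k → ℝ) (γ0 : Fin k → ℝ) (L : ℕ → S × A → ℝ)
    (d : Fin (T + 1) × S × A → ℝ) (y : Fin (T + 1) × S → ℝ)
    (z : Fin (T + 1) × S × A → ℝ) (lam : Fin k → ℝ) : Prop :=
  (∀ x, -(rLvec T r L x) =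
      tmulVec (ALmat T p L) y x + z x - ∑ i, cLmat T k c L i x * lam i) ∧
  mulVec (ALmat T p L) d = bvec T μ0 ∧
  (∀ i, dot (cLmat T k c L i) d ≤ γ0 i) ∧ (∀ x, 0 ≤ d x) ∧
  (∀ x, 0 ≤ z x) ∧ dot z d = 0 ∧ (∀ i, 0 ≤ lam i) ∧
  (∑ i, lam i * (dot (cLmat T k c L i) d - γ0 i)) = 0

/-- The population-level KKT system `𝒦^p(L)`. -/
def PopKKT [DecidableEq S] (T : ℕ) (μ0 : S → ℝ)
    (p : ℕ → S → A → (S × A → ℝ) → S → ℝ) (r : ℕ → S → A → (S × A → ℝ) → ℝ)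
    (L : ℕ → S × A → ℝ) (d : Fin (T + 1) × S × A → ℝ) (y : Fin (T + 1) × S → ℝ)
    (z : Fin (T + 1) × S × A → ℝ) : Prop :=
  (∀ x, -(rLvec T r L x) = tmulVec (ALmat T p L) y x + z x) ∧
  mulVec (ALmat T p L) d = bvec T μ0 ∧ (∀ x, 0 ≤ d x) ∧ (∀ x, 0 ≤ z x) ∧ dot z d = 0

/-- Bound for the dual variable `y` in CMFOMO. -/
noncomputable def yBound (cardS T : ℕ) (rmax cmax δ : ℝ) : ℝ :=
  (cardS : ℝ) * ((T : ℝ) + 1) * ((T : ℝ) + 2) / 2 * rmax * (1 + ((T : ℝ) + 1) / δ * cmax)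

/-- Bound for the dual variable `z` in CMFOMO. -/
noncomputable def zBound (cardS cardA T : ℕ) (rmax cmax δ : ℝ) : ℝ :=
  (cardS : ℝ) * (cardA : ℝ) * (((T : ℝ) + 1) ^ 2 - ((T : ℝ) + 1) + 2) * rmax *
    (1 + ((T : ℝ) + 1) / δ * cmax)

/-- Bound for the multiplier `λ` in CMFOMO. -/
noncomputable def lamBound (T : ℕ) (rmax δ : ℝ) : ℝ := ((T : ℝ) + 1) * rmax / δ

/-- The feasible region of the CMFOMO optimization problem. -/
noncomputable def CMFOMOFeasible (T k : ℕ) (rmax cmax δ : ℝ) (γ0 : Fin k → ℝ)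
    (Lv : Fin (T + 1) × S × A → ℝ) (y : Fin (T + 1) × S → ℝ)
    (z : Fin (T + 1) × S × A → ℝ) (lam w : Fin k → ℝ) : Prop :=
  (∀ x, 0 ≤ Lv x) ∧ (∀ t : Fin (T + 1), ∑ sa : S × A, Lv (t, sa.1, sa.2) = 1) ∧
  norm1 y ≤ yBound (Fintype.card S) T rmax cmax δ ∧
  (∀ x, 0 ≤ z x) ∧ norm1 z ≤ zBound (Fintype.card S) (Fintype.card A) T rmax cmax δ ∧
  (∀ i, 0 ≤ lam i ∧ lam i ≤ lamBound T rmax δ) ∧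
  (∀ i, 0 ≤ w i ∧ w i ≤ γ0 i)

/-- The CMFOMO objective function. -/
noncomputable def CMFOMOObj [DecidableEq S] (T k : ℕ) (μ0 : S → ℝ)
    (p : ℕ → S → A → (S × A → ℝ) → S → ℝ) (r : ℕ → S → A → (S × A → ℝ) → ℝ)
    (c : ℕ → S → A → (S × A → ℝ) → Fin k → ℝ) (γ0 : Fin k → ℝ)
    (c1 c2 c3 c4 c5 : ℝ) (Lv : Fin (T + 1) × S × A → ℝ) (y : Fin (T + 1) × S → ℝ)
    (z : Fin (T + 1) × S × A → ℝ) (lam w : Fin k → ℝ) : ℝ :=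
  c1 * norm2 (fun x => tmulVec (ALmat T p (toFam T Lv)) y x + z x +
        rLvec T r (toFam T Lv) x - ∑ i, cLmat T k c (toFam T Lv) i x * lam i) +
  c2 * norm2 (fun row => mulVec (ALmat T p (toFam T Lv)) Lv row - bvec T μ0 row) +
  c3 * dot z Lv +
  c4 * norm2 (fun i => γ0 i - dot (cLmat T k c (toFam T Lv) i) Lv - w i) +
  c5 * |∑ i, lam i * (γ0 i - dot (cLmat T k c (toFam T Lv) i) Lv)|

/-- The feasible region of the population-level CMFOMO problem. -/
noncomputable def PopCMFOMOFeasible (T k : ℕ) (rmax : ℝ) (γ0 : Fin k → ℝ)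
    (Lv : Fin (T + 1) × S × A → ℝ) (y : Fin (T + 1) × S → ℝ)
    (z : Fin (T + 1) × S × A → ℝ) (w : Fin k → ℝ) : Prop :=
  (∀ x, 0 ≤ Lv x) ∧ (∀ t : Fin (T + 1), ∑ sa : S × A, Lv (t, sa.1, sa.2) = 1) ∧
  norm1 y ≤ (Fintype.card S : ℝ) * ((T : ℝ) + 1) * ((T : ℝ) + 2) / 2 * rmax ∧
  (∀ x, 0 ≤ z x) ∧
  norm1 z ≤ (Fintype.card S : ℝ) * (Fintype.card A : ℝ) *
      (((T : ℝ) + 1) ^ 2 - ((T : ℝ) + 1) + 2) * rmax ∧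
  (∀ i, 0 ≤ w i ∧ w i ≤ γ0 i)

/-- The population-level CMFOMO objective function. -/
noncomputable def PopCMFOMOObj [DecidableEq S] (T k : ℕ) (μ0 : S → ℝ)
    (p : ℕ → S → A → (S × A → ℝ) → S → ℝ) (r : ℕ → S → A → (S × A → ℝ) → ℝ)
    (cp : ℕ → (S × A → ℝ) → Fin k → ℝ) (γ0 : Fin k → ℝ)
    (c1 c2 c3 c4 : ℝ) (Lv : Fin (T + 1) × S × A → ℝ) (y : Fin (T + 1) × S → ℝ)
    (z : Fin (T + 1) × S × A → ℝ) (w : Fin k → ℝ) : ℝ :=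
  c1 * norm2 (fun x => tmulVec (ALmat T p (toFam T Lv)) y x + z x + rLvec T r (toFam T Lv) x) +
  c2 * norm2 (fun row => mulVec (ALmat T p (toFam T Lv)) Lv row - bvec T μ0 row) +
  c3 * dot z Lv +
  c4 * norm2 (fun i => γ0 i -
    dot (cLmat T k (fun t _ _ m => cp t m) (toFam T Lv) i) Lv - w i)

/-- The optimal value `V*_c(L)` of the constrained MDP `CMDP(L)`. -/
noncomputable def Vstar (T k : ℕ) (μ0 : S → ℝ) (p : ℕ → S → A → (S × A → ℝ) → S → ℝ)
    (r : ℕ → S → A → (S × A → ℝ) → ℝ) (c : ℕ → S → A → (S × A → ℝ) → Fin k → ℝ)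
    (γ0 : Fin k → ℝ) (L : ℕ → S × A → ℝ) : ℝ :=
  sSup {v | ∃ π, IsPolicy π ∧ (∀ i, Cost T k μ0 p c π L i ≤ γ0 i) ∧ v = V T μ0 p r π L}

/-- The optimal value of the unconstrained MDP `MDP(L)`. -/
noncomputable def VstarU (T : ℕ) (μ0 : S → ℝ) (p : ℕ → S → A → (S × A → ℝ) → S → ℝ)
    (r : ℕ → S → A → (S × A → ℝ) → ℝ) (L : ℕ → S × A → ℝ) : ℝ :=
  sSup {v | ∃ π, IsPolicy π ∧ v = V T μ0 p r π L}

/-- The optimality gap `G_opt(π)`. -/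
noncomputable def Gopt (T k : ℕ) (μ0 : S → ℝ) (p : ℕ → S → A → (S × A → ℝ) → S → ℝ)
    (r : ℕ → S → A → (S × A → ℝ) → ℝ) (c : ℕ → S → A → (S × A → ℝ) → Fin k → ℝ)
    (γ0 : Fin k → ℝ) (π : ℕ → S → A → ℝ) : ℝ :=
  Vstar T k μ0 p r c γ0 (psiInd μ0 p π) - V T μ0 p r π (psiInd μ0 p π)

/-- The feasibility gap `G_fea(π)`. -/
noncomputable def Gfea (T k : ℕ) (μ0 : S → ℝ) (p : ℕ → S → A → (S × A → ℝ) → S → ℝ)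
    (c : ℕ → S → A → (S × A → ℝ) → Fin k → ℝ) (γ0 : Fin k → ℝ)
    (π : ℕ → S → A → ℝ) : ℝ :=
  norm2 (fun i : Fin k => min 0 (γ0 i - Cost T k μ0 p c π (psiInd μ0 p π) i))

/-- The population-level optimality gap. -/
noncomputable def GoptPop (T : ℕ) (μ0 : S → ℝ) (p : ℕ → S → A → (S × A → ℝ) → S → ℝ)
    (r : ℕ → S → A → (S × A → ℝ) → ℝ) (π : ℕ → S → A → ℝ) : ℝ :=
  VstarU T μ0 p r (psiInd μ0 p π) - V T μ0 p r π (psiInd μ0 p π)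

/-- The population-level feasibility gap. -/
noncomputable def GfeaPop (T k : ℕ) (μ0 : S → ℝ) (p : ℕ → S → A → (S × A → ℝ) → S → ℝ)
    (cp : ℕ → (S × A → ℝ) → Fin k → ℝ) (γ0 : Fin k → ℝ) (π : ℕ → S → A → ℝ) : ℝ :=
  norm2 (fun i : Fin k =>
    min 0 (γ0 i - ∑ t ∈ Finset.range (T + 1), cp t (psiInd μ0 p π t) i))

section NPlayer

variable [DecidableEq S] [DecidableEq A]

/-- Empirical state-action distribution of `N` players. -/
noncomputable def emp (N : ℕ) (x : Fin N → S × A) : S × A → ℝ :=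
  fun sa => (∑ i, if x i = sa then (1 : ℝ) else 0) / (N : ℝ)

/-- The joint law, at each time `t`, of the state-action profile of the `N` players
under the policy profile `πv`. -/
noncomputable def jointLaw (N : ℕ) (μ0 : S → ℝ) (p : ℕ → S → A → (S × A → ℝ) → S → ℝ)
    (πv : Fin N → ℕ → S → A → ℝ) : ℕ → (Fin N → S × A) → ℝ
  | 0 => fun x => ∏ i, μ0 (x i).1 * πv i 0 (x i).1 (x i).2
  | t + 1 => fun x => ∑ x' : Fin N → S × A, jointLaw N μ0 p πv t x' *
      ∏ i, p t (x' i).1 (x' i).2 (emp N x') (x i).1 * πv i (t + 1) (x i).1 (x i).2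

/-- Expected cumulative reward `V^{(i)}` of player `i` in the `N`-player game. -/
noncomputable def Vplayer (N T : ℕ) (μ0 : S → ℝ) (p : ℕ → S → A → (S × A → ℝ) → S → ℝ)
    (r : ℕ → S → A → (S × A → ℝ) → ℝ) (πv : Fin N → ℕ → S → A → ℝ) (i : Fin N) : ℝ :=
  ∑ t ∈ Finset.range (T + 1), ∑ x : Fin N → S × A,
    jointLaw N μ0 p πv t x * r t (x i).1 (x i).2 (emp N x)

/-- Expected cumulative cost `γ^{(i)}` of player `i` in the `N`-player game. -/
noncomputable def CostPlayer (N T k : ℕ) (μ0 : S → ℝ) (p : ℕ → S → A → (S × A → ℝ) → S → ℝ)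
    (c : ℕ → S → A → (S × A → ℝ) → Fin k → ℝ) (πv : Fin N → ℕ → S → A → ℝ)
    (i : Fin N) : Fin k → ℝ :=
  fun j => ∑ t ∈ Finset.range (T + 1), ∑ x : Fin N → S × A,
    jointLaw N μ0 p πv t x * c t (x i).1 (x i).2 (emp N x) j

/-- Feasibility gap `G_fea^{(i)}` of player `i` in the `N`-player game. -/
noncomputable def GfeaPlayer (N T k : ℕ) (μ0 : S → ℝ)
    (p : ℕ → S → A → (S × A → ℝ) → S → ℝ) (c : ℕ → S → A → (S × A → ℝ) → Fin k → ℝ)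
    (γ0 : Fin k → ℝ) (πv : Fin N → ℕ → S → A → ℝ) (i : Fin N) : ℝ :=
  norm2 (fun j : Fin k => min 0 (γ0 j - CostPlayer N T k μ0 p c πv i j))

/-- `(ε1, ε2)`-Nash equilibrium of the constrained `N`-player game. -/
noncomputable def IsEpsNash (N T k : ℕ) (μ0 : S → ℝ)
    (p : ℕ → S → A → (S × A → ℝ) → S → ℝ) (r : ℕ → S → A → (S × A → ℝ) → ℝ)
    (c : ℕ → S → A → (S × A → ℝ) → Fin k → ℝ) (γ0 : Fin k → ℝ)
    (πv : Fin N → ℕ → S → A → ℝ) (ε1 ε2 : ℝ) : Prop :=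
  ∀ i : Fin N,
    (∀ π', IsPolicy π' →
      GfeaPlayer N T k μ0 p c γ0 (Function.update πv i π') i = 0 →
      Vplayer N T μ0 p r (Function.update πv i π') i ≤ Vplayer N T μ0 p r πv i + ε1) ∧
    GfeaPlayer N T k μ0 p c γ0 πv i ≤ ε2

end NPlayer

/-! ### Auxiliary machinery for Theorem 4.3 -/

section Aux

set_option linter.unusedSectionVars false

variable {S A : Type*} [Fintype S] [Fintype A] [Nonempty S] [Nonempty A]
  [DecidableEq A]

/-- Optimal value function of the unconstrained MDP, indexed by steps-to-go:
`Wgo T p r L n s` is the optimal value at time `T - n` in state `s`. -/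
noncomputable def Wgo (T : ℕ) (p : ℕ → S → A → (S × A → ℝ) → S → ℝ)
    (r : ℕ → S → A → (S × A → ℝ) → ℝ) (L : ℕ → S × A → ℝ) : ℕ → S → ℝ
  | 0 => fun s => Finset.univ.sup' Finset.univ_nonempty fun a : A => r T s a (L T)
  | n + 1 => fun s => Finset.univ.sup' Finset.univ_nonempty fun a : A =>
      r (T - (n + 1)) s a (L (T - (n + 1))) +
        ∑ s', p (T - (n + 1)) s a (L (T - (n + 1))) s' * Wgo T p r L n s'

/-- The argument of the supremum defining `Wgo`. -/
noncomputable def WgoArg (T : ℕ) (p : ℕ → S → A → (S × A → ℝ) → S → ℝ)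
    (r : ℕ → S → A → (S × A → ℝ) → ℝ) (L : ℕ → S × A → ℝ) : ℕ → S → A → ℝ
  | 0 => fun s a => r T s a (L T)
  | n + 1 => fun s a => r (T - (n + 1)) s a (L (T - (n + 1))) +
        ∑ s', p (T - (n + 1)) s a (L (T - (n + 1))) s' * Wgo T p r L n s'

lemma Wgo_eq_sup (T : ℕ) (p : ℕ → S → A → (S × A → ℝ) → S → ℝ)
    (r : ℕ → S → A → (S × A → ℝ) → ℝ) (L : ℕ → S × A → ℝ) (n : ℕ) (s : S) :
    Wgo T p r L n s = Finset.univ.sup' Finset.univ_nonempty (WgoArg T p r L n s) := by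
  cases n <;> rfl

lemma WgoArg_le_Wgo (T : ℕ) (p : ℕ → S → A → (S × A → ℝ) → S → ℝ)
    (r : ℕ → S → A → (S × A → ℝ) → ℝ) (L : ℕ → S × A → ℝ) (n : ℕ) (s : S) (a : A) :
    WgoArg T p r L n s a ≤ Wgo T p r L n s := by
  rw [Wgo_eq_sup]
  exact Finset.le_sup' _ (Finset.mem_univ a)

/-- A maximizing action. -/
noncomputable def aopt (T : ℕ) (p : ℕ → S → A → (S × A → ℝ) → S → ℝ)
    (r : ℕ → S → A → (S × A → ℝ) → ℝ) (L : ℕ → S × A → ℝ) (n : ℕ) (s : S) : A :=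
  (Finset.exists_mem_eq_sup' Finset.univ_nonempty (WgoArg T p r L n s)).choose

lemma aopt_spec (T : ℕ) (p : ℕ → S → A → (S × A → ℝ) → S → ℝ)
    (r : ℕ → S → A → (S × A → ℝ) → ℝ) (L : ℕ → S × A → ℝ) (n : ℕ) (s : S) :
    Wgo T p r L n s = WgoArg T p r L n s (aopt T p r L n s) := by
  rw [Wgo_eq_sup]
  exact (Finset.exists_mem_eq_sup' Finset.univ_nonempty (WgoArg T p r L n s)).choose_spec.2

lemma Wgo_nonneg (T : ℕ) (p : ℕ → S → A → (S × A → ℝ) → S → ℝ) (hp : IsKernel T p)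
    (r : ℕ → S → A → (S × A → ℝ) → ℝ) (rmax : ℝ)
    (hr : ∀ t ≤ T, ∀ (s : S) (a : A) (m : S × A → ℝ), IsSimplex m →
      0 ≤ r t s a m ∧ r t s a m ≤ rmax)
    (L : ℕ → S × A → ℝ) (hL : ∀ t ≤ T, IsSimplex (L t)) :
    ∀ n, ∀ s : S, 0 ≤ Wgo T p r L n s := by
  intro n
  induction n with
  | zero =>
    intro s
    rw [aopt_spec T p r L 0 s]
    simp only [WgoArg]
    exact (hr T le_rfl s _ (L T) (hL T le_rfl)).1
  | succ n ih =>
    intro s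
    rw [aopt_spec T p r L (n + 1) s]
    simp only [WgoArg]
    have h1 : T - (n + 1) ≤ T := Nat.sub_le _ _
    refine add_nonneg ((hr _ h1 s _ _ (hL _ h1)).1) (Finset.sum_nonneg fun s' _ => ?_)
    exact mul_nonneg ((hp _ h1 s _ _ (hL _ h1)).1 s') (ih s')

lemma WgoArg_nonneg (T : ℕ) (p : ℕ → S → A → (S × A → ℝ) → S → ℝ) (hp : IsKernel T p)
    (r : ℕ → S → A → (S × A → ℝ) → ℝ) (rmax : ℝ)
    (hr : ∀ t ≤ T, ∀ (s : S) (a : A) (m : S × A → ℝ), IsSimplex m →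
      0 ≤ r t s a m ∧ r t s a m ≤ rmax)
    (L : ℕ → S × A → ℝ) (hL : ∀ t ≤ T, IsSimplex (L t)) :
    ∀ n, ∀ (s : S) (a : A), 0 ≤ WgoArg T p r L n s a := by
  intro n s a
  cases n with
  | zero =>
    simp only [WgoArg]
    exact (hr T le_rfl s a (L T) (hL T le_rfl)).1
  | succ n =>
    simp only [WgoArg]
    have h1 : T - (n + 1) ≤ T := Nat.sub_le _ _
    refine add_nonneg ((hr _ h1 s _ _ (hL _ h1)).1) (Finset.sum_nonneg fun s' _ => ?_)
    exact mul_nonneg ((hp _ h1 s _ _ (hL _ h1)).1 s')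
      (Wgo_nonneg T p hp r rmax hr L hL n s')

lemma Wgo_le (T : ℕ) (p : ℕ → S → A → (S × A → ℝ) → S → ℝ) (hp : IsKernel T p)
    (r : ℕ → S → A → (S × A → ℝ) → ℝ) (rmax : ℝ)
    (hr : ∀ t ≤ T, ∀ (s : S) (a : A) (m : S × A → ℝ), IsSimplex m →
      0 ≤ r t s a m ∧ r t s a m ≤ rmax)
    (L : ℕ → S × A → ℝ) (hL : ∀ t ≤ T, IsSimplex (L t)) :
    ∀ n, ∀ s : S, Wgo T p r L n s ≤ ((n : ℝ) + 1) * rmax := by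
  intro n
  induction n with
  | zero =>
    intro s
    rw [aopt_spec T p r L 0 s]
    simp only [WgoArg]
    have := (hr T le_rfl s (aopt T p r L 0 s) (L T) (hL T le_rfl)).2
    push_cast
    linarith
  | succ n ih =>
    intro s
    rw [aopt_spec T p r L (n + 1) s]
    have h1 : T - (n + 1) ≤ T := Nat.sub_le _ _
    have hsum : ∑ s', p (T - (n + 1)) s (aopt T p r L (n + 1) s) (L (T - (n + 1))) s' *
        Wgo T p r L n s' ≤ ((n : ℝ) + 1) * rmax := by
      calc ∑ s', p (T - (n + 1)) s (aopt T p r L (n + 1) s) (L (T - (n + 1))) s' *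
            Wgo T p r L n s'
          ≤ ∑ s', p (T - (n + 1)) s (aopt T p r L (n + 1) s) (L (T - (n + 1))) s' *
            (((n : ℝ) + 1) * rmax) := by
            refine Finset.sum_le_sum fun s' _ => ?_
            exact mul_le_mul_of_nonneg_left (ih s') ((hp _ h1 s _ _ (hL _ h1)).1 s')
        _ = ((n : ℝ) + 1) * rmax := by
            rw [← Finset.sum_mul, (hp _ h1 s _ _ (hL _ h1)).2, one_mul]
    have hrle := (hr _ h1 s (aopt T p r L (n + 1) s) _ (hL _ h1)).2
    simp only [WgoArg]
    push_cast
    linarith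

/-- One step of the occupation-measure recursion preserves the simplex. -/
lemma simplex_step {T t : ℕ} (ht : t ≤ T) (p : ℕ → S → A → (S × A → ℝ) → S → ℝ)
    (hp : IsKernel T p) (π1 : S → A → ℝ) (hπ1 : ∀ s, IsSimplex (π1 s))
    (m : S × A → ℝ) (hm : IsSimplex m) (ψ : S × A → ℝ) (hψ : IsSimplex ψ) :
    IsSimplex (fun sa : S × A => π1 sa.1 sa.2 *
      ∑ sa' : S × A, p t sa'.1 sa'.2 m sa.1 * ψ sa') := by
  constructor
  · intro sa
    refine mul_nonneg ((hπ1 sa.1).1 sa.2) (Finset.sum_nonneg fun sa' _ => ?_)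
    exact mul_nonneg ((hp t ht sa'.1 sa'.2 m hm).1 sa.1) (hψ.1 sa')
  · rw [Fintype.sum_prod_type]
    have h1 : ∀ s : S, ∑ a : A, π1 s a * ∑ sa' : S × A, p t sa'.1 sa'.2 m s * ψ sa' =
        ∑ sa' : S × A, p t sa'.1 sa'.2 m s * ψ sa' := by
      intro s
      rw [← Finset.sum_mul, (hπ1 s).2, one_mul]
    rw [Finset.sum_congr rfl fun s _ => h1 s, Finset.sum_comm]
    have h2 : ∀ sa' : S × A, ∑ s : S, p t sa'.1 sa'.2 m s * ψ sa' = ψ sa' := by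
      intro sa'
      rw [← Finset.sum_mul, (hp t ht sa'.1 sa'.2 m hm).2, one_mul]
    rw [Finset.sum_congr rfl fun sa' _ => h2 sa']
    exact hψ.2

lemma simplex_zero (μ0 : S → ℝ) (hμ0 : IsSimplex μ0) (π0 : S → A → ℝ)
    (hπ0 : ∀ s, IsSimplex (π0 s)) :
    IsSimplex (fun sa : S × A => π0 sa.1 sa.2 * μ0 sa.1) := by
  constructor
  · exact fun sa => mul_nonneg ((hπ0 sa.1).1 sa.2) (hμ0.1 sa.1)
  · rw [Fintype.sum_prod_type]
    have h1 : ∀ s : S, ∑ a : A, π0 s a * μ0 s = μ0 s := by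
      intro s
      rw [← Finset.sum_mul, (hπ0 s).2, one_mul]
    rw [Finset.sum_congr rfl fun s _ => h1 s]
    exact hμ0.2

lemma psiInd_simplex (T : ℕ) (μ0 : S → ℝ) (hμ0 : IsSimplex μ0)
    (p : ℕ → S → A → (S × A → ℝ) → S → ℝ) (hp : IsKernel T p)
    (π : ℕ → S → A → ℝ) (hπ : IsPolicy π) :
    ∀ t ≤ T, IsSimplex (psiInd μ0 p π t) := by
  intro t
  induction t with
  | zero => exact fun _ => simplex_zero μ0 hμ0 (π 0) (hπ 0)
  | succ t ih =>
    intro ht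
    have ht' : t ≤ T := Nat.le_of_succ_le ht
    exact simplex_step (Nat.lt_of_succ_le ht).le p hp (π (t + 1)) (hπ (t + 1))
      (psiInd μ0 p π t) (ih ht') (psiInd μ0 p π t) (ih ht')

lemma psi_simplex (T : ℕ) (μ0 : S → ℝ) (hμ0 : IsSimplex μ0)
    (p : ℕ → S → A → (S × A → ℝ) → S → ℝ) (hp : IsKernel T p)
    (L : ℕ → S × A → ℝ) (hL : ∀ t ≤ T, IsSimplex (L t))
    (π' : ℕ → S → A → ℝ) (hπ' : IsPolicy π') :
    ∀ t ≤ T, IsSimplex (psi μ0 p π' L t) := by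
  intro t
  induction t with
  | zero => exact fun _ => simplex_zero μ0 hμ0 (π' 0) (hπ' 0)
  | succ t ih =>
    intro ht
    have ht' : t ≤ T := Nat.le_of_succ_le ht
    exact simplex_step ht' p hp (π' (t + 1)) (hπ' (t + 1))
      (L t) (hL t ht') (psi μ0 p π' L t) (ih ht')

lemma psi_psiInd (μ0 : S → ℝ) (p : ℕ → S → A → (S × A → ℝ) → S → ℝ)
    (π : ℕ → S → A → ℝ) : ∀ t, psi μ0 p π (psiInd μ0 p π) t = psiInd μ0 p π t := by
  intro t
  induction t with
  | zero => rfl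
  | succ t ih => funext sa; simp only [psi, psiInd, ih]

lemma dot_tmulVec {I J : Type*} [Fintype I] [Fintype J] (M : I → J → ℝ) (y : I → ℝ)
    (v : J → ℝ) : dot (tmulVec M y) v = dot y (mulVec M v) := by
  simp only [dot, tmulVec, mulVec, Finset.sum_mul, Finset.mul_sum]
  rw [Finset.sum_comm]
  exact Finset.sum_congr rfl fun i _ => Finset.sum_congr rfl fun j _ => by ring

lemma sum_fin_time (T : ℕ) (F : ℕ → S × A → ℝ) :
    ∑ x : Fin (T + 1) × S × A, F (x.1 : ℕ) (x.2.1, x.2.2)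
      = ∑ t ∈ Finset.range (T + 1), ∑ sa : S × A, F t sa := by
  rw [Fintype.sum_prod_type]
  rw [← Fin.sum_univ_eq_sum_range (fun n => ∑ sa : S × A, F n sa) (T + 1)]

lemma gauss : ∀ n : ℕ, ∑ t ∈ Finset.range n, ((n : ℝ) - t) = n * (n + 1) / 2 := by
  intro n
  induction n with
  | zero => simp
  | succ n ih =>
    rw [Finset.sum_range_succ]
    push_cast
    have h : ∀ t ∈ Finset.range n, ((n : ℝ) + 1 - t) = ((n : ℝ) - t) + 1 := by
      intro t _; ring
    rw [Finset.sum_congr rfl h, Finset.sum_add_distrib, ih, Finset.sum_const,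
      Finset.card_range]
    push_cast
    ring

lemma norm2_eq_zero' {J : Type*} [Fintype J] (v : J → ℝ) (h : ∀ j, v j = 0) :
    norm2 v = 0 := by
  simp [norm2, h]

lemma eq_zero_of_norm2 {J : Type*} [Fintype J] (v : J → ℝ) (h : norm2 v = 0) :
    ∀ j, v j = 0 := by
  have hnn : 0 ≤ ∑ j, v j ^ 2 := Finset.sum_nonneg fun j _ => sq_nonneg _
  have hle : ∑ j, v j ^ 2 ≤ 0 := Real.sqrt_eq_zero'.mp h
  have h0 : ∑ j, v j ^ 2 = 0 := le_antisymm hle hnn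
  intro j
  have := (Finset.sum_eq_zero_iff_of_nonneg (fun j _ => sq_nonneg (v j))).mp h0 j
    (Finset.mem_univ j)
  exact pow_eq_zero_iff two_ne_zero |>.mp this

lemma ALmat_apply_lt [DecidableEq S] (T : ℕ) (p : ℕ → S → A → (S × A → ℝ) → S → ℝ)
    (L : ℕ → S × A → ℝ) (u : Fin (T + 1)) (s'' : S) (tc : Fin (T + 1)) (s : S) (a : A)
    (hu : (u : ℕ) < T) :
    ALmat T p L (u, s'') (tc, s, a) =
      (if tc = u then p (u : ℕ) s a (L (u : ℕ)) s'' else 0) +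
        (if (tc : ℕ) = (u : ℕ) + 1 ∧ s = s'' then -1 else 0) := by
  simp [ALmat, hu]

lemma ALmat_apply_last [DecidableEq S] (T : ℕ) (p : ℕ → S → A → (S × A → ℝ) → S → ℝ)
    (L : ℕ → S × A → ℝ) (u : Fin (T + 1)) (s'' : S) (tc : Fin (T + 1)) (s : S) (a : A)
    (hu : ¬ (u : ℕ) < T) :
    ALmat T p L (u, s'') (tc, s, a) = if (tc : ℕ) = 0 ∧ s = s'' then 1 else 0 := by
  simp [ALmat, hu]

/-- Explicit formula for `A_L^⊤ y` when `y` is built from a value function `W`. -/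
lemma tmul_formula [DecidableEq S] (T : ℕ) (p : ℕ → S → A → (S × A → ℝ) → S → ℝ)
    (L : ℕ → S × A → ℝ) (W : ℕ → S → ℝ) (t : Fin (T + 1)) (s : S) (a : A) :
    tmulVec (ALmat T p L)
      (fun us : Fin (T + 1) × S =>
        if (us.1 : ℕ) < T then W ((us.1 : ℕ) + 1) us.2 else -(W 0 us.2)) (t, s, a)
    = -(W (t : ℕ) s) +
      (if (t : ℕ) < T then
        ∑ s', p (t : ℕ) s a (L (t : ℕ)) s' * W ((t : ℕ) + 1) s' else 0) := by
  simp only [tmulVec]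
  rw [Fintype.sum_prod_type]
  have step1 : (∑ u : Fin (T + 1), ∑ s'' : S, ALmat T p L (u, s'') (t, s, a) *
      (if ((u, s'').1 : ℕ) < T then W (((u, s'').1 : ℕ) + 1) (u, s'').2
        else -(W 0 (u, s'').2)))
      = ∑ u : Fin (T + 1),
        (if (u : ℕ) < T then
          (if (t : ℕ) = (u : ℕ) then
            ∑ s', p (u : ℕ) s a (L (u : ℕ)) s' * W ((u : ℕ) + 1) s' else 0) +
          (if (t : ℕ) = (u : ℕ) + 1 then -(W (t : ℕ) s) else 0)
        else (if (t : ℕ) = 0 then -(W 0 s) else 0)) := by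
    refine Finset.sum_congr rfl fun u _ => ?_
    by_cases hu : (u : ℕ) < T
    · simp only [ALmat_apply_lt T p L u _ t s a hu, hu, if_true]
      rw [Finset.sum_congr rfl fun s'' _ => add_mul _ _ _, Finset.sum_add_distrib]
      congr 1
      · by_cases h1 : t = u
        · have h1' : (t : ℕ) = (u : ℕ) := by rw [h1]
          simp [h1, h1']
        · have h1' : ¬ (t : ℕ) = (u : ℕ) := fun h => h1 (Fin.ext h)
          simp [h1, h1']
      · by_cases h2 : (t : ℕ) = (u : ℕ) + 1
        · have hsum : ∀ s'' : S,
              (if (t : ℕ) = (u : ℕ) + 1 ∧ s = s'' then (-1 : ℝ) else 0) * W ((u : ℕ) + 1) s''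
              = if s = s'' then -(W ((u : ℕ) + 1) s'') else 0 := by
            intro s''; by_cases h : s = s'' <;> simp [h, h2]
          rw [Finset.sum_congr rfl fun s'' _ => hsum s'', Finset.sum_ite_eq, if_pos h2, h2]
          simp
        · simp [h2]
    · simp only [ALmat_apply_last T p L u _ t s a hu, hu, if_false]
      by_cases h0 : (t : ℕ) = 0
      · simp only [h0, if_true, true_and]
        have : ∀ s'' : S, (if s = s'' then (1 : ℝ) else 0) * -(W 0 s'')
            = if s = s'' then -(W 0 s'') else 0 := by
          intro s''; by_cases h : s = s'' <;> simp [h]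
        rw [Finset.sum_congr rfl fun s'' _ => this s'', Finset.sum_ite_eq]
        simp
      · simp [h0]
  rw [step1]
  rw [Fin.sum_univ_eq_sum_range (fun n =>
    (if n < T then
      (if (t : ℕ) = n then ∑ s', p n s a (L n) s' * W (n + 1) s' else 0) +
      (if (t : ℕ) = n + 1 then -(W (t : ℕ) s) else 0)
    else (if (t : ℕ) = 0 then -(W 0 s) else 0))) (T + 1)]
  rw [Finset.sum_range_succ]
  rw [if_neg (lt_irrefl T)]
  have hmem : ∀ n ∈ Finset.range T, (if n < T then
      (if (t : ℕ) = n then ∑ s', p n s a (L n) s' * W (n + 1) s' else 0) +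
      (if (t : ℕ) = n + 1 then -(W (t : ℕ) s) else 0)
    else (if (t : ℕ) = 0 then -(W 0 s) else 0)) =
      (if (t : ℕ) = n then ∑ s', p n s a (L n) s' * W (n + 1) s' else 0) +
      (if (t : ℕ) = n + 1 then -(W (t : ℕ) s) else 0) := by
    intro n hn
    rw [if_pos (Finset.mem_range.mp hn)]
  have htT : (t : ℕ) < T + 1 := t.isLt
  have e2 : ∑ n ∈ Finset.range T, (if (t : ℕ) = n + 1 then -(W (t : ℕ) s) else 0)
      = if (t : ℕ) = 0 then 0 else -(W (t : ℕ) s) := by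
    by_cases h0 : (t : ℕ) = 0
    · rw [if_pos h0]
      exact Finset.sum_eq_zero fun n _ => if_neg (by omega)
    · rw [if_neg h0]
      obtain ⟨m, hm⟩ := Nat.exists_eq_succ_of_ne_zero h0
      have hmT : m < T := by omega
      have hsec : ∀ n ∈ Finset.range T, (if (t : ℕ) = n + 1 then -(W (t : ℕ) s) else 0)
          = (if m = n then -(W (t : ℕ) s) else 0) :=
        fun n _ => if_congr (by omega) rfl rfl
      rw [Finset.sum_congr rfl hsec, Finset.sum_ite_eq,
        if_pos (Finset.mem_range.mpr hmT)]
  rw [Finset.sum_congr rfl hmem, Finset.sum_add_distrib, e2, Finset.sum_ite_eq]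
  simp only [Finset.mem_range]
  by_cases h0 : (t : ℕ) = 0 <;> by_cases hT : (t : ℕ) < T <;> simp [h0, hT] <;> try ring

/-- The occupation measure of any policy satisfies the linear flow constraints. -/
lemma flow_eq [DecidableEq S] (T : ℕ) (μ0 : S → ℝ)
    (p : ℕ → S → A → (S × A → ℝ) → S → ℝ) (L : ℕ → S × A → ℝ)
    (π' : ℕ → S → A → ℝ) (hπ' : IsPolicy π') :
    mulVec (ALmat T p L) (toVec T (psi μ0 p π' L)) = bvec T μ0 := by
  funext row
  obtain ⟨u, s0⟩ := row
  simp only [mulVec, toVec, bvec]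
  rw [Fintype.sum_prod_type]
  by_cases hu : (u : ℕ) < T
  · have step1 : (∑ tc : Fin (T + 1), ∑ sa : S × A,
        ALmat T p L (u, s0) (tc, sa.1, sa.2) *
          psi μ0 p π' L ((tc, sa.1, sa.2).1 : ℕ) ((tc, sa.1, sa.2).2.1, (tc, sa.1, sa.2).2.2))
        = ∑ tc : Fin (T + 1),
          ((if (tc : ℕ) = (u : ℕ) then
              ∑ sa : S × A, p (u : ℕ) sa.1 sa.2 (L (u : ℕ)) s0 * psi μ0 p π' L (u : ℕ) sa
            else 0) +
          (if (tc : ℕ) = (u : ℕ) + 1 then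
              -(∑ a' : A, psi μ0 p π' L ((u : ℕ) + 1) (s0, a')) else 0)) := by
      refine Finset.sum_congr rfl fun tc _ => ?_
      simp only [ALmat_apply_lt T p L u s0 tc _ _ hu]
      rw [Finset.sum_congr rfl fun sa _ => add_mul _ _ _, Finset.sum_add_distrib]
      congr 1
      · by_cases h1 : tc = u
        · have h1' : (tc : ℕ) = (u : ℕ) := by rw [h1]
          simp only [h1, h1', if_true]
        · have h1' : ¬ (tc : ℕ) = (u : ℕ) := fun h => h1 (Fin.ext h)
          simp [h1, h1']
      · by_cases h2 : (tc : ℕ) = (u : ℕ) + 1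
        · simp only [h2, if_true, true_and]
          rw [Fintype.sum_prod_type]
          trans (∑ s1 : S, if s1 = s0 then
              -(∑ a' : A, psi μ0 p π' L ((u : ℕ) + 1) (s0, a')) else 0)
          · refine Finset.sum_congr rfl fun s1 _ => ?_
            by_cases h : s1 = s0
            · simp [h]
            · simp [h]
          · rw [Finset.sum_ite_eq']
            simp
        · simp [h2]
    rw [step1]
    rw [Fin.sum_univ_eq_sum_range (fun n =>
      (if n = (u : ℕ) then
          ∑ sa : S × A, p (u : ℕ) sa.1 sa.2 (L (u : ℕ)) s0 * psi μ0 p π' L (u : ℕ) sa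
        else 0) +
      (if n = (u : ℕ) + 1 then
          -(∑ a' : A, psi μ0 p π' L ((u : ℕ) + 1) (s0, a')) else 0)) (T + 1)]
    rw [Finset.sum_add_distrib, Finset.sum_ite_eq', Finset.sum_ite_eq',
      if_pos (Finset.mem_range.mpr u.isLt), if_pos (Finset.mem_range.mpr (by omega))]
    have hψ : ∑ a' : A, psi μ0 p π' L ((u : ℕ) + 1) (s0, a')
        = ∑ sa : S × A, p (u : ℕ) sa.1 sa.2 (L (u : ℕ)) s0 * psi μ0 p π' L (u : ℕ) sa := by
      simp only [psi]
      rw [← Finset.sum_mul, (hπ' ((u : ℕ) + 1) s0).2, one_mul]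
    rw [hψ, if_neg (Nat.ne_of_lt hu)]
    ring
  · have huT : (u : ℕ) = T := by omega
    have step1 : (∑ tc : Fin (T + 1), ∑ sa : S × A,
        ALmat T p L (u, s0) (tc, sa.1, sa.2) *
          psi μ0 p π' L ((tc, sa.1, sa.2).1 : ℕ) ((tc, sa.1, sa.2).2.1, (tc, sa.1, sa.2).2.2))
        = ∑ tc : Fin (T + 1),
          (if (tc : ℕ) = 0 then ∑ a' : A, psi μ0 p π' L 0 (s0, a') else 0) := by
      refine Finset.sum_congr rfl fun tc _ => ?_
      simp only [ALmat_apply_last T p L u s0 tc _ _ hu]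
      by_cases h0 : (tc : ℕ) = 0
      · simp only [h0, if_true, true_and]
        rw [Fintype.sum_prod_type]
        trans (∑ s1 : S, if s1 = s0 then ∑ a' : A, psi μ0 p π' L 0 (s0, a') else 0)
        · refine Finset.sum_congr rfl fun s1 _ => ?_
          by_cases h : s1 = s0
          · simp [h]
          · simp [h]
        · rw [Finset.sum_ite_eq']
          simp
      · simp [h0]
    rw [step1]
    rw [Fin.sum_univ_eq_sum_range (fun n =>
      (if n = 0 then ∑ a' : A, psi μ0 p π' L 0 (s0, a') else 0)) (T + 1)]
    rw [Finset.sum_ite_eq', if_pos (Finset.mem_range.mpr (by omega))]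
    have hψ : ∑ a' : A, psi μ0 p π' L 0 (s0, a') = μ0 s0 := by
      simp only [psi]
      rw [← Finset.sum_mul, (hπ' 0 s0).2, one_mul]
    rw [hψ, if_pos huT]

/-- Pushing a state-function expectation one step through the occupation recursion. -/
lemma psi_push (μ0 : S → ℝ) (p : ℕ → S → A → (S × A → ℝ) → S → ℝ)
    (L : ℕ → S × A → ℝ) (π' : ℕ → S → A → ℝ) (hπ' : IsPolicy π') (n : ℕ) (g : S → ℝ) :
    ∑ sa : S × A, psi μ0 p π' L (n + 1) sa * g sa.1
      = ∑ sa : S × A, psi μ0 p π' L n sa * ∑ s' : S, p n sa.1 sa.2 (L n) s' * g s' := by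
  simp only [psi]
  rw [Fintype.sum_prod_type]
  have h1 : ∀ s : S, ∑ a : A,
      (π' (n + 1) s a * ∑ sa' : S × A, p n sa'.1 sa'.2 (L n) s * psi μ0 p π' L n sa') * g s
      = (∑ sa' : S × A, p n sa'.1 sa'.2 (L n) s * psi μ0 p π' L n sa') * g s := by
    intro s
    rw [← Finset.sum_mul, ← Finset.sum_mul, (hπ' (n + 1) s).2, one_mul]
  rw [Finset.sum_congr rfl fun s _ => h1 s]
  rw [Finset.sum_congr rfl fun s _ => Finset.sum_mul _ _ (g s)]
  rw [Finset.sum_comm]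
  refine Finset.sum_congr rfl fun sa' _ => ?_
  rw [Finset.mul_sum]
  exact Finset.sum_congr rfl fun s _ => by ring

/-- The greedy policy. -/
noncomputable def piOpt (T : ℕ) (p : ℕ → S → A → (S × A → ℝ) → S → ℝ)
    (r : ℕ → S → A → (S × A → ℝ) → ℝ) (L : ℕ → S × A → ℝ) : ℕ → S → A → ℝ :=
  fun t s a => if a = aopt T p r L (T - t) s then 1 else 0

lemma piOpt_policy (T : ℕ) (p : ℕ → S → A → (S × A → ℝ) → S → ℝ)
    (r : ℕ → S → A → (S × A → ℝ) → ℝ) (L : ℕ → S × A → ℝ) :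
    IsPolicy (piOpt T p r L) := by
  intro t s
  constructor
  · intro a
    unfold piOpt
    by_cases h : a = aopt T p r L (T - t) s <;> simp [h]
  · simp [piOpt, Finset.sum_ite_eq']

lemma psi_piOpt_zero (T : ℕ) (μ0 : S → ℝ) (p : ℕ → S → A → (S × A → ℝ) → S → ℝ)
    (r : ℕ → S → A → (S × A → ℝ) → ℝ) (L : ℕ → S × A → ℝ) (t : ℕ) (s : S) (a : A)
    (h : a ≠ aopt T p r L (T - t) s) :
    psi μ0 p (piOpt T p r L) L t (s, a) = 0 := by
  cases t with
  | zero =>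
    show piOpt T p r L 0 s a * μ0 s = 0
    unfold piOpt
    rw [if_neg h, zero_mul]
  | succ t =>
    show piOpt T p r L (t + 1) s a * _ = 0
    unfold piOpt
    rw [if_neg h, zero_mul]

lemma value_le (T : ℕ) (μ0 : S → ℝ) (hμ0 : IsSimplex μ0)
    (p : ℕ → S → A → (S × A → ℝ) → S → ℝ) (hp : IsKernel T p)
    (r : ℕ → S → A → (S × A → ℝ) → ℝ) (rmax : ℝ)
    (hr : ∀ t ≤ T, ∀ (s : S) (a : A) (m : S × A → ℝ), IsSimplex m →
      0 ≤ r t s a m ∧ r t s a m ≤ rmax)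
    (L : ℕ → S × A → ℝ) (hL : ∀ t ≤ T, IsSimplex (L t))
    (π' : ℕ → S → A → ℝ) (hπ' : IsPolicy π') :
    ∀ m, m ≤ T → ∑ t ∈ Finset.Ico (T - m) (T + 1), ∑ sa : S × A,
        r t sa.1 sa.2 (L t) * psi μ0 p π' L t sa
      ≤ ∑ sa : S × A, psi μ0 p π' L (T - m) sa * Wgo T p r L m sa.1 := by
  intro m
  induction m with
  | zero =>
    intro _
    rw [Nat.sub_zero, Finset.Ico_add_one_right_eq_Icc, Finset.Icc_self, Finset.sum_singleton]
    refine Finset.sum_le_sum fun sa _ => ?_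
    have hψ : 0 ≤ psi μ0 p π' L T sa :=
      (psi_simplex T μ0 hμ0 p hp L hL π' hπ' T le_rfl).1 sa
    have harg := WgoArg_le_Wgo T p r L 0 sa.1 sa.2
    simp only [WgoArg] at harg
    nlinarith
  | succ m ih =>
    intro hm
    have hm' : m ≤ T := Nat.le_of_succ_le hm
    have hn1 : T - (m + 1) + 1 = T - m := by omega
    have hlt : T - (m + 1) < T + 1 := by omega
    rw [Finset.sum_eq_sum_Ico_succ_bot hlt, hn1]
    refine le_trans (add_le_add_right (ih hm') _) ?_
    rw [← hn1, psi_push μ0 p L π' hπ' (T - (m + 1)) (fun s => Wgo T p r L m s),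
      ← Finset.sum_add_distrib]
    refine Finset.sum_le_sum fun sa _ => ?_
    have hψ : 0 ≤ psi μ0 p π' L (T - (m + 1)) sa :=
      (psi_simplex T μ0 hμ0 p hp L hL π' hπ' (T - (m + 1)) (Nat.sub_le _ _)).1 sa
    have harg := WgoArg_le_Wgo T p r L (m + 1) sa.1 sa.2
    simp only [WgoArg] at harg
    have := mul_le_mul_of_nonneg_left harg hψ
    rw [mul_add] at this
    linarith

lemma value_eq (T : ℕ) (μ0 : S → ℝ)
    (p : ℕ → S → A → (S × A → ℝ) → S → ℝ)
    (r : ℕ → S → A → (S × A → ℝ) → ℝ) (L : ℕ → S × A → ℝ) :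
    ∀ m, m ≤ T → ∑ t ∈ Finset.Ico (T - m) (T + 1), ∑ sa : S × A,
        r t sa.1 sa.2 (L t) * psi μ0 p (piOpt T p r L) L t sa
      = ∑ sa : S × A, psi μ0 p (piOpt T p r L) L (T - m) sa * Wgo T p r L m sa.1 := by
  intro m
  induction m with
  | zero =>
    intro _
    rw [Nat.sub_zero, Finset.Ico_add_one_right_eq_Icc, Finset.Icc_self, Finset.sum_singleton]
    refine Finset.sum_congr rfl fun sa _ => ?_
    obtain ⟨s, a⟩ := sa
    by_cases hψ0 : psi μ0 p (piOpt T p r L) L T (s, a) = 0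
    · rw [hψ0]; ring
    · have ha : a = aopt T p r L 0 s := by
        by_contra hne
        exact hψ0 (psi_piOpt_zero T μ0 p r L T s a (by rwa [Nat.sub_self]))
      have hspec := aopt_spec T p r L 0 s
      simp only [WgoArg] at hspec
      show r T s a (L T) * _ = _ * Wgo T p r L 0 s
      rw [ha, ← hspec]
      ring
  | succ m ih =>
    intro hm
    have hm' : m ≤ T := Nat.le_of_succ_le hm
    have hn1 : T - (m + 1) + 1 = T - m := by omega
    have hlt : T - (m + 1) < T + 1 := by omega
    rw [Finset.sum_eq_sum_Ico_succ_bot hlt, hn1, ih hm', ← hn1,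
      psi_push μ0 p L (piOpt T p r L) (piOpt_policy T p r L) (T - (m + 1))
        (fun s => Wgo T p r L m s),
      ← Finset.sum_add_distrib]
    refine Finset.sum_congr rfl fun sa _ => ?_
    obtain ⟨s, a⟩ := sa
    by_cases hψ0 : psi μ0 p (piOpt T p r L) L (T - (m + 1)) (s, a) = 0
    · rw [hψ0]; ring
    · have ha : a = aopt T p r L (m + 1) s := by
        by_contra hne
        refine hψ0 (psi_piOpt_zero T μ0 p r L (T - (m + 1)) s a ?_)
        rwa [show T - (T - (m + 1)) = m + 1 by omega]
      have hspec := aopt_spec T p r L (m + 1) s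
      simp only [WgoArg] at hspec
      have key : r (T - (m + 1)) s a (L (T - (m + 1))) +
          ∑ s', p (T - (m + 1)) s a (L (T - (m + 1))) s' * Wgo T p r L m s'
          = Wgo T p r L (m + 1) s := by
        rw [ha]; exact hspec.symm
      show r (T - (m + 1)) s a (L (T - (m + 1))) *
            psi μ0 p (piOpt T p r L) L (T - (m + 1)) (s, a) +
          psi μ0 p (piOpt T p r L) L (T - (m + 1)) (s, a) *
            ∑ s' : S, p (T - (m + 1)) s a (L (T - (m + 1))) s' * Wgo T p r L m s'
          = psi μ0 p (piOpt T p r L) L (T - (m + 1)) (s, a) * Wgo T p r L (m + 1) s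
      rw [← key]
      ring

end Aux


/-- Theorem 4.3 (Characteristicity under population-level constraints): a policy with
zero feasibility gap and optimality gap at most `ε1` yields, via `L = Ψ(π)`,
`w = γ0 - Σ_t c_t(L_t)` and a bounded solution of the KKT system `𝒦^p(L)`, a feasible
point of the population-level CMFOMO problem with objective value at most `ε1 c3`. -/
theorem pop_cmfomo_characteristicity {S A : Type*} [Fintype S] [Fintype A] [DecidableEq S]
    [Nonempty S] [Nonempty A]
    (T k : ℕ) (μ0 : S → ℝ) (hμ0 : IsSimplex μ0)
    (p : ℕ → S → A → (S × A → ℝ) → S → ℝ) (hp : IsKernel T p)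
    (r : ℕ → S → A → (S × A → ℝ) → ℝ) (rmax : ℝ)
    (hr : ∀ t ≤ T, ∀ (s : S) (a : A) (m : S × A → ℝ), IsSimplex m →
      0 ≤ r t s a m ∧ r t s a m ≤ rmax)
    (cp : ℕ → (S × A → ℝ) → Fin k → ℝ)
    (hcp : ∀ t ≤ T, ∀ m : S × A → ℝ, IsSimplex m → ∀ i, 0 ≤ cp t m i)
    (γ0 : Fin k → ℝ)
    (ε1 : ℝ) (hε1 : 0 ≤ ε1)
    (c1 c2 c3 c4 : ℝ) (hc1 : 0 < c1) (hc2 : 0 < c2) (hc3 : 0 < c3) (hc4 : 0 < c4)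
    (π : ℕ → S → A → ℝ) (hπ : IsPolicy π)
    (hfeagap : GfeaPop T k μ0 p cp γ0 π = 0)
    (hoptgap : 0 ≤ GoptPop T μ0 p r π ∧ GoptPop T μ0 p r π ≤ ε1)
    (w : Fin k → ℝ)
    (hw : w = fun i => γ0 i - ∑ t ∈ Finset.range (T + 1), cp t (psiInd μ0 p π t) i) :
    ∃ (d : Fin (T + 1) × S × A → ℝ) (y : Fin (T + 1) × S → ℝ)
      (z : Fin (T + 1) × S × A → ℝ),
      PopKKT T μ0 p r (psiInd μ0 p π) d y z ∧
      norm1 y ≤ (Fintype.card S : ℝ) * ((T : ℝ) + 1) * ((T : ℝ) + 2) / 2 * rmax ∧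
      norm1 z ≤ (Fintype.card S : ℝ) * (Fintype.card A : ℝ) *
          (((T : ℝ) + 1) ^ 2 - ((T : ℝ) + 1) + 2) * rmax ∧
      PopCMFOMOFeasible T k rmax γ0 (toVec T (psiInd μ0 p π)) y z w ∧
      0 ≤ PopCMFOMOObj T k μ0 p r cp γ0 c1 c2 c3 c4 (toVec T (psiInd μ0 p π)) y z w ∧
      PopCMFOMOObj T k μ0 p r cp γ0 c1 c2 c3 c4 (toVec T (psiInd μ0 p π)) y z w ≤
        ε1 * c3 := by
  classical
  set L : ℕ → S × A → ℝ := psiInd μ0 p π with hLdef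
  -- basic facts about the flow L
  have hLsimp : ∀ t ≤ T, IsSimplex (L t) := by
    rw [hLdef]; exact psiInd_simplex T μ0 hμ0 p hp π hπ
  have hLpsi : ∀ t, psi μ0 p π L t = L t := by
    simp only [hLdef]; exact psi_psiInd μ0 p π
  have htv : toVec T L = toVec T (psi μ0 p π L) := by
    funext x; simp only [toVec]; rw [hLpsi]
  have hrmax : (0 : ℝ) ≤ rmax := by
    obtain ⟨s0⟩ := ‹Nonempty S›
    obtain ⟨a0⟩ := ‹Nonempty A›
    have h := hr T le_rfl s0 a0 (L T) (hLsimp T le_rfl)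
    linarith
  -- the value function and dual variables
  set Wv : ℕ → S → ℝ := fun t s => Wgo T p r L (T - t) s with hWv
  set Y : Fin (T + 1) × S → ℝ := fun us =>
    if (us.1 : ℕ) < T then Wv ((us.1 : ℕ) + 1) us.2 else -(Wv 0 us.2) with hY
  set Z : Fin (T + 1) × S × A → ℝ := fun x =>
    Wv (x.1 : ℕ) x.2.1 - (r (x.1 : ℕ) x.2.1 x.2.2 (L (x.1 : ℕ)) +
      (if (x.1 : ℕ) < T then
        ∑ s', p (x.1 : ℕ) x.2.1 x.2.2 (L (x.1 : ℕ)) s' * Wv ((x.1 : ℕ) + 1) s'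
      else 0)) with hZ
  -- the Bellman bracket equals WgoArg
  have hZarg : ∀ t : ℕ, t ≤ T → ∀ (s : S) (a : A),
      r t s a (L t) + (if t < T then ∑ s', p t s a (L t) s' * Wv (t + 1) s' else 0)
        = WgoArg T p r L (T - t) s a := by
    intro t ht s a
    rcases eq_or_lt_of_le ht with h | h
    · rw [h, if_neg (lt_irrefl T), add_zero, Nat.sub_self]
      simp [WgoArg]
    · have h1 : T - t = (T - (t + 1)) + 1 := by omega
      rw [if_pos h, h1]
      simp only [WgoArg]
      rw [show T - (T - (t + 1) + 1) = t by omega]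
  -- stationarity
  have hstat : ∀ x : Fin (T + 1) × S × A,
      -(rLvec T r L x) = tmulVec (ALmat T p L) Y x + Z x := by
    rintro ⟨t, s, a⟩
    rw [hY, tmul_formula T p L Wv t s a]
    simp only [hZ, rLvec]
    ring
  -- dot products against Z
  have hdotZ : ∀ v : Fin (T + 1) × S × A → ℝ,
      dot Z v = -(dot (rLvec T r L) v) - dot Y (mulVec (ALmat T p L) v) := by
    intro v
    rw [← dot_tmulVec]
    simp only [dot]
    rw [← Finset.sum_neg_distrib, ← Finset.sum_sub_distrib]
    refine Finset.sum_congr rfl fun x _ => ?_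
    have hx := hstat x
    have hZx : Z x = -(rLvec T r L x) - tmulVec (ALmat T p L) Y x := by linarith
    rw [hZx]; ring
  -- dot of Y against b
  have hYb : dot Y (bvec T μ0) = -(∑ s, μ0 s * Wgo T p r L T s) := by
    simp only [dot, bvec]
    rw [Fintype.sum_prod_type, Fin.sum_univ_castSucc]
    have h1 : ∀ v : Fin T, ∑ s : S,
        Y (Fin.castSucc v, s) * (if ((Fin.castSucc v : Fin (T + 1)) : ℕ) = T then μ0 s else 0)
        = 0 := by
      intro v
      refine Finset.sum_eq_zero fun s _ => ?_
      rw [if_neg (by have hv := v.isLt; simp only [Fin.coe_castSucc]; omega), mul_zero]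
    rw [Finset.sum_congr rfl fun v _ => h1 v, Finset.sum_const, smul_zero, zero_add]
    have h2 : ∀ s : S, Y (Fin.last T, s) * (if ((Fin.last T : Fin (T + 1)) : ℕ) = T
        then μ0 s else 0) = -(μ0 s * Wgo T p r L T s) := by
      intro s
      rw [if_pos (by simp)]
      simp only [hY, hWv]
      rw [if_neg (by simp)]
      rw [Nat.sub_zero]
      ring
    rw [Finset.sum_congr rfl fun s _ => h2 s, Finset.sum_neg_distrib]
  -- dot of the reward vector against occupation measures
  have hrd : ∀ π' : ℕ → S → A → ℝ,
      dot (rLvec T r L) (toVec T (psi μ0 p π' L)) = V T μ0 p r π' L := by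
    intro π'
    exact (sum_fin_time T fun t sa => r t sa.1 sa.2 (L t) * psi μ0 p π' L t sa).trans rfl
  -- initial-distribution expansion
  have hpsi0 : ∀ (π' : ℕ → S → A → ℝ), IsPolicy π' → ∀ g : S → ℝ,
      ∑ sa : S × A, psi μ0 p π' L 0 sa * g sa.1 = ∑ s, μ0 s * g s := by
    intro π' hπ' g
    have hpt : ∀ sa : S × A, psi μ0 p π' L 0 sa * g sa.1
        = π' 0 sa.1 sa.2 * (μ0 sa.1 * g sa.1) := by
      intro sa
      show (π' 0 sa.1 sa.2 * μ0 sa.1) * g sa.1 = _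
      ring
    rw [Finset.sum_congr rfl fun sa _ => hpt sa, Fintype.sum_prod_type]
    refine Finset.sum_congr rfl fun s _ => ?_
    show (∑ a : A, π' 0 s a * (μ0 s * g s)) = μ0 s * g s
    rw [← Finset.sum_mul, (hπ' 0 s).2, one_mul]
  -- the optimal value
  have hub : ∀ π' : ℕ → S → A → ℝ, IsPolicy π' →
      V T μ0 p r π' L ≤ ∑ s, μ0 s * Wgo T p r L T s := by
    intro π' hπ'
    have h := value_le T μ0 hμ0 p hp r rmax hr L hLsimp π' hπ' T le_rfl
    rw [Nat.sub_self] at h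
    calc V T μ0 p r π' L
        = ∑ t ∈ Finset.Ico 0 (T + 1), ∑ sa : S × A,
            r t sa.1 sa.2 (L t) * psi μ0 p π' L t sa := by
          rw [V, Finset.range_eq_Ico]
      _ ≤ ∑ sa : S × A, psi μ0 p π' L 0 sa * Wgo T p r L T sa.1 := h
      _ = ∑ s, μ0 s * Wgo T p r L T s := hpsi0 π' hπ' _
  have hVopt : V T μ0 p r (piOpt T p r L) L = ∑ s, μ0 s * Wgo T p r L T s := by
    have h := value_eq T μ0 p r L T le_rfl
    rw [Nat.sub_self] at h
    calc V T μ0 p r (piOpt T p r L) L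
        = ∑ t ∈ Finset.Ico 0 (T + 1), ∑ sa : S × A,
            r t sa.1 sa.2 (L t) * psi μ0 p (piOpt T p r L) L t sa := by
          rw [V, Finset.range_eq_Ico]
      _ = ∑ sa : S × A, psi μ0 p (piOpt T p r L) L 0 sa * Wgo T p r L T sa.1 := h
      _ = ∑ s, μ0 s * Wgo T p r L T s := hpsi0 _ (piOpt_policy T p r L) _
  have hVstar : VstarU T μ0 p r L = ∑ s, μ0 s * Wgo T p r L T s := by
    apply le_antisymm
    · refine csSup_le ⟨V T μ0 p r π L, π, hπ, rfl⟩ ?_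
      rintro v ⟨π', hπ', rfl⟩
      exact hub π' hπ'
    · refine le_csSup ⟨∑ s, μ0 s * Wgo T p r L T s, ?_⟩
        ⟨piOpt T p r L, piOpt_policy T p r L, hVopt.symm⟩
      rintro v ⟨π', hπ', rfl⟩
      exact hub π' hπ'
  have hGopt : GoptPop T μ0 p r π
      = (∑ s, μ0 s * Wgo T p r L T s) - V T μ0 p r π L := by
    rw [GoptPop, ← hLdef, hVstar]
  -- flow equation for L itself
  have hflowL : mulVec (ALmat T p L) (toVec T L) = bvec T μ0 := by
    rw [htv]; exact flow_eq T μ0 p L π hπ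
  -- the candidate occupation measure
  have hdpsi := psi_simplex T μ0 hμ0 p hp L hLsimp (piOpt T p r L) (piOpt_policy T p r L)
  have hZnn : ∀ x : Fin (T + 1) × S × A, 0 ≤ Z x := by
    rintro ⟨t, s, a⟩
    have hle : (t : ℕ) ≤ T := by omega
    show 0 ≤ Wv (t : ℕ) s - _
    rw [hZarg (t : ℕ) hle s a]
    have := WgoArg_le_Wgo T p r L (T - (t : ℕ)) s a
    simp only [hWv]
    linarith
  have hZval : ∀ x : Fin (T + 1) × S × A,
      Z x = Wv (x.1 : ℕ) x.2.1 - WgoArg T p r L (T - (x.1 : ℕ)) x.2.1 x.2.2 := by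
    rintro ⟨t, s, a⟩
    show Wv (t : ℕ) s - _ = _
    rw [hZarg (t : ℕ) (by omega) s a]
  -- dot Z (toVec T L) equals the optimality gap
  have hdZL : dot Z (toVec T L) = (∑ s, μ0 s * Wgo T p r L T s) - V T μ0 p r π L := by
    rw [hdotZ, hflowL, hYb, htv, hrd π]
    ring
  have hdZd : dot Z (toVec T (psi μ0 p (piOpt T p r L) L)) = 0 := by
    rw [hdotZ, flow_eq T μ0 p L (piOpt T p r L) (piOpt_policy T p r L), hYb,
      hrd (piOpt T p r L), hVopt]
    ring
  -- norm bounds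
  have hWnn := Wgo_nonneg T p hp r rmax hr L hLsimp
  have hWle := Wgo_le T p hp r rmax hr L hLsimp
  have hArgnn := WgoArg_nonneg T p hp r rmax hr L hLsimp
  have hY1 : norm1 Y ≤ (Fintype.card S : ℝ) * ((T : ℝ) + 1) * ((T : ℝ) + 2) / 2 * rmax := by
    rw [norm1, Fintype.sum_prod_type, Fin.sum_univ_castSucc]
    have hcast : ∀ v : Fin T, ∑ s : S, |Y (Fin.castSucc v, s)|
        ≤ (Fintype.card S : ℝ) * (((T : ℝ) - (v : ℕ)) * rmax) := by
      intro v
      have hv : ((Fin.castSucc v : Fin (T + 1)) : ℕ) = (v : ℕ) := rfl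
      have hvT : (v : ℕ) < T := v.isLt
      calc ∑ s : S, |Y (Fin.castSucc v, s)|
          ≤ ∑ s : S, ((T : ℝ) - (v : ℕ)) * rmax := by
            refine Finset.sum_le_sum fun s _ => ?_
            simp only [hY, hv, if_pos hvT]
            rw [abs_of_nonneg (hWnn _ s)]
            have := hWle (T - ((v : ℕ) + 1)) s
            have hc : ((T - ((v : ℕ) + 1) : ℕ) : ℝ) = (T : ℝ) - (v : ℕ) - 1 := by
              have : ((v : ℕ) : ℝ) + 1 ≤ (T : ℝ) := by exact_mod_cast hvT
              push_cast [Nat.cast_sub (by omega : (v : ℕ) + 1 ≤ T)]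
              ring
            rw [hc] at this
            simpa using this.trans_eq (by ring)
        _ = (Fintype.card S : ℝ) * (((T : ℝ) - (v : ℕ)) * rmax) := by
            rw [Finset.sum_const, Finset.card_univ, nsmul_eq_mul]
    have hlast : ∑ s : S, |Y (Fin.last T, s)|
        ≤ (Fintype.card S : ℝ) * (((T : ℝ) + 1) * rmax) := by
      calc ∑ s : S, |Y (Fin.last T, s)|
          ≤ ∑ s : S, ((T : ℝ) + 1) * rmax := by
            refine Finset.sum_le_sum fun s _ => ?_
            simp only [hY]
            rw [if_neg (by simp), abs_neg, abs_of_nonneg (hWnn _ s)]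
            have := hWle (T - 0) s
            rw [Nat.sub_zero] at this
            exact this
        _ = (Fintype.card S : ℝ) * (((T : ℝ) + 1) * rmax) := by
            rw [Finset.sum_const, Finset.card_univ, nsmul_eq_mul]
    have hsum : ∑ v : Fin T, (Fintype.card S : ℝ) * (((T : ℝ) - (v : ℕ)) * rmax)
        = (Fintype.card S : ℝ) * rmax * ((T : ℝ) * ((T : ℝ) + 1) / 2) := by
      calc ∑ v : Fin T, (Fintype.card S : ℝ) * (((T : ℝ) - (v : ℕ)) * rmax)
          = ∑ v : Fin T, ((Fintype.card S : ℝ) * rmax) * ((T : ℝ) - (v : ℕ)) :=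
            Finset.sum_congr rfl fun v _ => by ring
        _ = ((Fintype.card S : ℝ) * rmax) * ∑ v : Fin T, ((T : ℝ) - (v : ℕ)) := by
            rw [Finset.mul_sum]
        _ = ((Fintype.card S : ℝ) * rmax) * ∑ n ∈ Finset.range T, ((T : ℝ) - n) := by
            rw [Fin.sum_univ_eq_sum_range (fun n => (T : ℝ) - n) T]
        _ = (Fintype.card S : ℝ) * rmax * ((T : ℝ) * ((T : ℝ) + 1) / 2) := by
            rw [gauss T]
    refine le_trans (add_le_add (Finset.sum_le_sum fun v _ => hcast v) hlast)
      (le_of_eq ?_)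
    rw [hsum]
    ring
  have hZ1 : norm1 Z ≤ (Fintype.card S : ℝ) * (Fintype.card A : ℝ) *
      (((T : ℝ) + 1) ^ 2 - ((T : ℝ) + 1) + 2) * rmax := by
    have hZle : ∀ x : Fin (T + 1) × S × A, |Z x| ≤ Wgo T p r L (T - (x.1 : ℕ)) x.2.1 := by
      intro x
      rw [abs_of_nonneg (hZnn x), hZval x]
      have := hArgnn (T - (x.1 : ℕ)) x.2.1 x.2.2
      simp only [hWv]
      linarith
    have hg := gauss (T + 1)
    push_cast at hg
    have hx : ((T : ℝ) + 1) * (((T : ℝ) + 1) + 1) / 2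
        ≤ ((T : ℝ) + 1) ^ 2 - ((T : ℝ) + 1) + 2 := by
      nlinarith [sq_nonneg ((T : ℝ) - 1), Nat.cast_nonneg (α := ℝ) T]
    have hC : (0 : ℝ) ≤ (Fintype.card S : ℝ) * (Fintype.card A : ℝ) * rmax := by positivity
    calc norm1 Z
        ≤ ∑ x : Fin (T + 1) × S × A, Wgo T p r L (T - (x.1 : ℕ)) x.2.1 :=
          Finset.sum_le_sum fun x _ => hZle x
      _ = ∑ t : Fin (T + 1), ∑ s : S, ∑ a : A, Wgo T p r L (T - (t : ℕ)) s := by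
          rw [Fintype.sum_prod_type]
          exact Finset.sum_congr rfl fun t _ =>
            Fintype.sum_prod_type (fun sa : S × A => Wgo T p r L (T - (t : ℕ)) sa.1)
      _ ≤ ∑ t : Fin (T + 1), ∑ s : S, ∑ a : A, ((T : ℝ) + 1 - (t : ℕ)) * rmax := by
          refine Finset.sum_le_sum fun t _ => Finset.sum_le_sum fun s _ =>
            Finset.sum_le_sum fun a _ => ?_
          have h1 := hWle (T - (t : ℕ)) s
          have hle : (t : ℕ) ≤ T := by omega
          have hc : ((T - (t : ℕ) : ℕ) : ℝ) = (T : ℝ) - (t : ℕ) := by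
            rw [Nat.cast_sub hle]
          rw [hc] at h1
          calc Wgo T p r L (T - (t : ℕ)) s ≤ ((T : ℝ) - (t : ℕ) + 1) * rmax := h1
            _ = ((T : ℝ) + 1 - (t : ℕ)) * rmax := by ring
      _ = ((Fintype.card S : ℝ) * (Fintype.card A : ℝ) * rmax) *
            ∑ t ∈ Finset.range (T + 1), ((T : ℝ) + 1 - t) := by
          rw [Fin.sum_univ_eq_sum_range
            (fun n => ∑ s : S, ∑ a : A, ((T : ℝ) + 1 - n) * rmax) (T + 1),
            Finset.mul_sum]
          refine Finset.sum_congr rfl fun n _ => ?_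
          simp only [Finset.sum_const, Finset.card_univ, nsmul_eq_mul]
          ring
      _ ≤ (Fintype.card S : ℝ) * (Fintype.card A : ℝ) *
            (((T : ℝ) + 1) ^ 2 - ((T : ℝ) + 1) + 2) * rmax := by
          rw [hg]
          refine le_trans (mul_le_mul_of_nonneg_left hx hC) (le_of_eq (by ring))
  -- feasibility of the flow as a vector
  have hLv_nn : ∀ x : Fin (T + 1) × S × A, 0 ≤ toVec T L x := by
    intro x
    exact (hLsimp (x.1 : ℕ) (by omega)).1 _
  have hLv_sum : ∀ t : Fin (T + 1), ∑ sa : S × A, toVec T L (t, sa.1, sa.2) = 1 := by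
    intro t
    exact (hLsimp (t : ℕ) (by omega)).2
  -- the feasibility gap hypothesis componentwise
  have hfea : ∀ i, min 0 (γ0 i - ∑ t ∈ Finset.range (T + 1), cp t (L t) i) = 0 := by
    have h0 := hfeagap
    rw [GfeaPop] at h0
    rw [← hLdef] at h0
    exact eq_zero_of_norm2 _ h0
  have hwnn : ∀ i, 0 ≤ w i := by
    intro i
    simp only [hw]
    have h := hfea i
    by_contra hlt
    push_neg at hlt
    rw [min_eq_right hlt.le] at h
    linarith
  have hwle : ∀ i, w i ≤ γ0 i := by
    intro i
    simp only [hw]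
    have h : 0 ≤ ∑ t ∈ Finset.range (T + 1), cp t (L t) i := by
      refine Finset.sum_nonneg fun t ht => ?_
      have htT : t ≤ T := by have := Finset.mem_range.mp ht; omega
      exact hcp t htT (L t) (hLsimp t htT) i
    linarith
  -- rewriting the objective
  have hfam : ∀ t : Fin (T + 1), toFam T (toVec T L) (t : ℕ) = L (t : ℕ) := by
    intro t
    funext sa
    simp only [toFam, toVec]
    rw [dif_pos t.isLt]
  have hAf : ALmat T p (toFam T (toVec T L)) = ALmat T p L := by
    funext row col
    simp only [ALmat]
    rw [hfam row.1]
  have hrLf : rLvec T r (toFam T (toVec T L)) = rLvec T r L := by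
    funext x
    simp only [rLvec]
    rw [hfam x.1]
  have hcLf : ∀ i, cLmat T k (fun t _ _ m => cp t m) (toFam T (toVec T L)) i
      = cLmat T k (fun t _ _ m => cp t m) L i := by
    intro i
    funext x
    simp only [cLmat]
    rw [hfam x.1]
  have hdotc : ∀ i, dot (cLmat T k (fun t _ _ m => cp t m) L i) (toVec T L)
      = ∑ t ∈ Finset.range (T + 1), cp t (L t) i := by
    intro i
    have h2 : dot (cLmat T k (fun t _ _ m => cp t m) L i) (toVec T L)
        = ∑ t ∈ Finset.range (T + 1), ∑ sa : S × A, cp t (L t) i * L t sa :=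
      sum_fin_time T fun t sa => cp t (L t) i * L t sa
    rw [h2]
    refine Finset.sum_congr rfl fun t ht => ?_
    have htT : t ≤ T := by have := Finset.mem_range.mp ht; omega
    rw [← Finset.mul_sum, (hLsimp t htT).2, mul_one]
  have hobj : PopCMFOMOObj T k μ0 p r cp γ0 c1 c2 c3 c4 (toVec T L) Y Z w
      = c3 * ((∑ s, μ0 s * Wgo T p r L T s) - V T μ0 p r π L) := by
    rw [PopCMFOMOObj]
    simp only [hAf, hrLf, hcLf]
    have e1 : norm2 (fun x => tmulVec (ALmat T p L) Y x + Z x + rLvec T r L x) = 0 :=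
      norm2_eq_zero' _ fun x => by have := hstat x; linarith
    have e2 : norm2 (fun row => mulVec (ALmat T p L) (toVec T L) row - bvec T μ0 row) = 0 :=
      norm2_eq_zero' _ fun row => by rw [hflowL]; ring
    have e4 : norm2 (fun i => γ0 i -
        dot (cLmat T k (fun t _ _ m => cp t m) L i) (toVec T L) - w i) = 0 := by
      refine norm2_eq_zero' _ fun i => ?_
      rw [hdotc i]
      simp only [hw]
      ring
    rw [e1, e2, e4, hdZL]
    ring
  have hGopt' : (∑ s, μ0 s * Wgo T p r L T s) - V T μ0 p r π L = GoptPop T μ0 p r π :=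
    hGopt.symm
  -- assembling everything
  refine ⟨toVec T (psi μ0 p (piOpt T p r L) L), Y, Z,
    ⟨hstat, flow_eq T μ0 p L (piOpt T p r L) (piOpt_policy T p r L),
      fun x => (hdpsi (x.1 : ℕ) (by omega)).1 _, hZnn, hdZd⟩,
    hY1, hZ1,
    ⟨hLv_nn, hLv_sum, hY1, hZnn, hZ1, fun i => ⟨hwnn i, hwle i⟩⟩, ?_, ?_⟩
  · rw [hobj, hGopt']
    exact mul_nonneg hc3.le hoptgap.1
  · rw [hobj, hGopt', mul_comm]
    exact mul_le_mul_of_nonneg_right hoptgap.2 hc3.le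

end CMFG
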